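/- There exists an absolute constant c > 0 such that the following holds. Let H be an n-vertex graph with a strict linear order < on E(H), let k be a positive integer, and let d = 2|E(H)|/n be the average degree of H. If d ≥ 2k, then H contains at least k·n·(c·d/k)^k distinct monotone k-trails. -/

import Mathlib

open SimpleGraph

/-- `lt` is a strict linear order on the edges of `H`. -/
def IsEdgeOrder {V : Type} (H : SimpleGraph V) (lt : Sym2 V → Sym2 V → Prop) : Prop :=
  (∀ e ∈ H.edgeSet, ¬ lt e e) ∧
  (∀ e₁ ∈ H.edgeSet, ∀ e₂ ∈ H.edgeSet, ∀ e₃ ∈ H.edgeSet, lt e₁ e₂ → lt e₂ e₃ → lt e₁ e₃) ∧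
  (∀ e₁ ∈ H.edgeSet, ∀ e₂ ∈ H.edgeSet, e₁ ≠ e₂ → lt e₁ e₂ ∨ lt e₂ e₁)

set_option linter.unusedSectionVars false
set_option linter.unusedVariables false
set_option linter.unreachableTactic false
set_option linter.unusedTactic false

namespace MonoTrail

variable {V : Type} {H : SimpleGraph V} {lt : Sym2 V → Sym2 V → Prop}

lemma isEdgeOrder_anti (h : IsEdgeOrder H lt) {H' : SimpleGraph V} (hle : H' ≤ H) :
    IsEdgeOrder H' lt := by
  obtain ⟨h1, h2, h3⟩ := h
  have hsub : H'.edgeSet ⊆ H.edgeSet := SimpleGraph.edgeSet_mono hle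
  exact ⟨fun e he => h1 e (hsub he),
    fun e₁ he₁ e₂ he₂ e₃ he₃ => h2 e₁ (hsub he₁) e₂ (hsub he₂) e₃ (hsub he₃),
    fun e₁ he₁ e₂ he₂ => h3 e₁ (hsub he₁) e₂ (hsub he₂)⟩

lemma chain'_head_lt (h : IsEdgeOrder H lt) :
    ∀ (l : List (Sym2 V)) (a : Sym2 V), a ∈ H.edgeSet → (∀ e ∈ l, e ∈ H.edgeSet) →
      List.Chain' lt (a :: l) → ∀ b ∈ l, lt a b := by
  intro l
  induction l with
  | nil => intro a _ _ _ b hb; cases hb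
  | cons c l ih =>
    intro a ha hmem hch b hb
    replace hch := List.isChain_cons_cons.mp hch
    have hc : c ∈ H.edgeSet := hmem c List.mem_cons_self
    rcases List.mem_cons.mp hb with rfl | hb
    · exact hch.1
    · have := ih c hc (fun e he => hmem e (List.mem_cons_of_mem _ he)) hch.2 b hb
      exact h.2.1 a ha c hc b (hmem b (List.mem_cons_of_mem _ hb)) hch.1 this

lemma chain'_pairwise (h : IsEdgeOrder H lt) :
    ∀ (l : List (Sym2 V)), (∀ e ∈ l, e ∈ H.edgeSet) → List.Chain' lt l → List.Pairwise lt l := by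
  intro l
  induction l with
  | nil => intro _ _; exact List.Pairwise.nil
  | cons a l ih =>
    intro hmem hch
    replace hch := List.isChain_cons.mp hch
    exact List.Pairwise.cons
      (chain'_head_lt h l a (hmem a List.mem_cons_self)
        (fun e he => hmem e (List.mem_cons_of_mem _ he))
        (List.isChain_cons.mpr hch))
      (ih (fun e he => hmem e (List.mem_cons_of_mem _ he)) hch.2)

lemma chain'_nodup (h : IsEdgeOrder H lt) (l : List (Sym2 V))
    (hmem : ∀ e ∈ l, e ∈ H.edgeSet) (hch : List.Chain' lt l) : l.Nodup := by
  have hp := chain'_pairwise h l hmem hch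
  refine List.Pairwise.imp_of_mem ?_ hp
  intro a b ha hb hab
  intro he
  subst he
  exact h.1 a (hmem a ha) hab

/-- minimal element of a nonempty finset of edges w.r.t. `lt` -/
lemma exists_min' (h : IsEdgeOrder H lt) (s : Finset (Sym2 V))
    (hs : ∀ x ∈ s, x ∈ H.edgeSet) (hne : s.Nonempty) :
    ∃ a ∈ s, ∀ b ∈ s, b ≠ a → lt a b := by
  classical
  induction s using Finset.induction_on with
  | empty => exact absurd hne (by simp)
  | @insert a s ha ih =>
    rcases s.eq_empty_or_nonempty with rfl | hsne
    · exact ⟨a, by simp, by intro b hb hne'; simp at hb; exact absurd hb hne'⟩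
    · obtain ⟨m, hm, hmin⟩ := ih (fun x hx => hs x (Finset.mem_insert_of_mem hx)) hsne
      have haE : a ∈ H.edgeSet := hs a (Finset.mem_insert_self _ _)
      have hmE : m ∈ H.edgeSet := hs m (Finset.mem_insert_of_mem hm)
      have hne' : a ≠ m := fun he => ha (he ▸ hm)
      rcases h.2.2 a haE m hmE hne' with hlt | hlt
      · refine ⟨a, Finset.mem_insert_self _ _, ?_⟩
        intro b hb hba
        rcases Finset.mem_insert.mp hb with rfl | hb
        · exact absurd rfl hba
        · rcases eq_or_ne b m with rfl | hbm
          · exact hlt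
          · exact h.2.1 a haE m hmE b (hs b (Finset.mem_insert_of_mem hb)) hlt (hmin b hb hbm)
      · refine ⟨m, Finset.mem_insert_of_mem hm, ?_⟩
        intro b hb hbm
        rcases Finset.mem_insert.mp hb with rfl | hb
        · exact hlt
        · exact hmin b hb hbm


variable [Fintype V]

/-- relation describing the successor dart -/
def NxtRel (d d' : H.Dart) : Prop :=
  d'.fst = d.snd ∧ lt d.edge d'.edge ∧
    ∀ f ∈ H.edgeSet, d.snd ∈ f → lt d.edge f → ¬ lt f d'.edge

lemma dart_eq_of_edge_snd {d₁ d₂ : H.Dart} (he : d₁.edge = d₂.edge) (hs : d₁.snd = d₂.snd) :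
    d₁ = d₂ := by
  rcases SimpleGraph.dart_edge_eq_iff d₁ d₂ |>.mp he with rfl | rfl
  · rfl
  · exfalso
    have : d₂.symm.snd = d₂.snd := hs
    simp only [SimpleGraph.Dart.symm_toProd, Prod.snd_swap] at this
    exact d₂.fst_ne_snd this

lemma exists_nxtRel (h : IsEdgeOrder H lt) (d : H.Dart)
    (hf : ∃ f ∈ H.edgeSet, d.snd ∈ f ∧ lt d.edge f) : ∃ d', NxtRel (lt := lt) d d' := by
  classical
  have hfin := H.edgeSet.toFinite
  set s : Finset (Sym2 V) := {f ∈ hfin.toFinset | d.snd ∈ f ∧ lt d.edge f} with hs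
  have hmem_s : ∀ x, x ∈ s ↔ x ∈ H.edgeSet ∧ d.snd ∈ x ∧ lt d.edge x := by
    intro x
    rw [hs, Finset.mem_filter, Set.Finite.mem_toFinset]
  have hsub : ∀ x ∈ s, x ∈ H.edgeSet := fun x hx => ((hmem_s x).mp hx).1
  have hne : s.Nonempty := by
    obtain ⟨f, hf1, hf2, hf3⟩ := hf
    exact ⟨f, (hmem_s f).mpr ⟨hf1, hf2, hf3⟩⟩
  obtain ⟨a, ha, hmin⟩ := exists_min' h s hsub hne
  have haE : a ∈ H.edgeSet := hsub a ha
  have hamem : d.snd ∈ a ∧ lt d.edge a := ((hmem_s a).mp ha).2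
  obtain ⟨w, hw⟩ := Sym2.mem_iff_exists.mp hamem.1
  have hadj : H.Adj d.snd w := by rw [← SimpleGraph.mem_edgeSet, ← hw]; exact haE
  refine ⟨⟨(d.snd, w), hadj⟩, rfl, ?_, ?_⟩
  · have : (SimpleGraph.Dart.mk (d.snd, w) hadj).edge = a := by
      rw [SimpleGraph.Dart.edge_mk, hw]
    rw [this]; exact hamem.2
  · intro f hfE hfmem hflt
    have hedge : (SimpleGraph.Dart.mk (d.snd, w) hadj).edge = a := by
      rw [SimpleGraph.Dart.edge_mk, hw]
    rw [hedge]
    intro hfa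
    have hfs : f ∈ s := (hmem_s f).mpr ⟨hfE, hfmem, hflt⟩
    rcases eq_or_ne f a with rfl | hne'
    · exact h.1 f hfE hfa
    · exact h.1 f hfE (h.2.1 f hfE a haE f hfE hfa (hmin f hfs hne'))

open Classical in
noncomputable def nxt (h : IsEdgeOrder H lt) (d : H.Dart) : Option H.Dart :=
  if hd : ∃ d', NxtRel (lt := lt) d d' then some (Classical.choose hd) else none

lemma nxt_some_spec (h : IsEdgeOrder H lt) {d d' : H.Dart} (hd : nxt h d = some d') :
    NxtRel (lt := lt) d d' := by
  classical
  unfold nxt at hd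
  split at hd
  · rename_i hex
    have := Classical.choose_spec hex
    rwa [Option.some_inj.mp hd] at this
  · cases hd

lemma nxt_none_spec (h : IsEdgeOrder H lt) {d : H.Dart} (hd : nxt h d = none) :
    ∀ f ∈ H.edgeSet, d.snd ∈ f → ¬ lt d.edge f := by
  classical
  unfold nxt at hd
  split at hd
  · cases hd
  · rename_i hex
    intro f hfE hfm hflt
    exact hex (exists_nxtRel h d ⟨f, hfE, hfm, hflt⟩)

lemma nxt_inj (h : IsEdgeOrder H lt) {d₁ d₂ δ : H.Dart}
    (h₁ : nxt h d₁ = some δ) (h₂ : nxt h d₂ = some δ) : d₁ = d₂ := by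
  obtain ⟨hf₁, hlt₁, hmin₁⟩ := nxt_some_spec h h₁
  obtain ⟨hf₂, hlt₂, hmin₂⟩ := nxt_some_spec h h₂
  have hsnd : d₁.snd = d₂.snd := hf₁.symm.trans hf₂
  have hedge : d₁.edge = d₂.edge := by
    by_contra hne
    have h1E := d₁.edge_mem
    have h2E := d₂.edge_mem
    have hm21 : d₁.snd ∈ d₂.edge := by
      rw [hsnd]; exact Sym2.mem_mk_right _ _
    have hm12 : d₂.snd ∈ d₁.edge := by
      rw [← hsnd]; exact Sym2.mem_mk_right _ _
    rcases h.2.2 _ h1E _ h2E hne with hlt' | hlt'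
    · exact hmin₁ d₂.edge h2E hm21 hlt' hlt₂
    · exact hmin₂ d₁.edge h1E hm12 hlt' hlt₁
  exact dart_eq_of_edge_snd hedge hsnd

lemma dead_snd_inj (h : IsEdgeOrder H lt) {d₁ d₂ : H.Dart}
    (h₁ : nxt h d₁ = none) (h₂ : nxt h d₂ = none) (hs : d₁.snd = d₂.snd) : d₁ = d₂ := by
  have hedge : d₁.edge = d₂.edge := by
    by_contra hne
    rcases h.2.2 _ d₁.edge_mem _ d₂.edge_mem hne with hlt' | hlt'
    · exact nxt_none_spec h h₁ d₂.edge d₂.edge_mem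
        (by rw [hs]; exact Sym2.mem_mk_right _ _) hlt'
    · exact nxt_none_spec h h₂ d₁.edge d₁.edge_mem
        (by rw [← hs]; exact Sym2.mem_mk_right _ _) hlt'
  exact dart_eq_of_edge_snd hedge hs

noncomputable def iterN (h : IsEdgeOrder H lt) : ℕ → H.Dart → Option H.Dart
  | 0, d => some d
  | (j+1), d => (iterN h j d).bind (nxt h)

lemma iterN_succ_front (h : IsEdgeOrder H lt) (j : ℕ) (d : H.Dart) :
    iterN h (j+1) d = (nxt h d).bind (iterN h j) := by
  induction j generalizing d with
  | zero =>
    show (iterN h 0 d).bind (nxt h) = _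
    cases hn : nxt h d <;> simp [iterN, hn] <;> rfl
  | succ j ih =>
    show (iterN h (j+1) d).bind (nxt h) = _
    rw [ih d, Option.bind_assoc]
    rfl

lemma iterN_inj (h : IsEdgeOrder H lt) (j : ℕ) {d₁ d₂ δ : H.Dart}
    (h₁ : iterN h j d₁ = some δ) (h₂ : iterN h j d₂ = some δ) : d₁ = d₂ := by
  induction j generalizing δ with
  | zero =>
    simp only [iterN, Option.some_inj] at h₁ h₂
    rw [h₁, ← h₂]
  | succ j ih =>
    simp only [iterN] at h₁ h₂
    rcases hb₁ : iterN h j d₁ with _ | γ₁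
    · rw [hb₁] at h₁; cases h₁
    rcases hb₂ : iterN h j d₂ with _ | γ₂
    · rw [hb₂] at h₂; cases h₂
    rw [hb₁] at h₁; rw [hb₂] at h₂
    simp only [Option.bind_some] at h₁ h₂
    have : γ₁ = γ₂ := nxt_inj h h₁ h₂
    subst this
    exact ih hb₁ hb₂

end MonoTrail


namespace MonoTrail2
open MonoTrail

variable {V : Type} [Fintype V] (H : SimpleGraph V) (lt : Sym2 V → Sym2 V → Prop)

def MSet (k : ℕ) : Set ((u : V) × (v : V) × H.Walk u v) :=
  {x | x.2.2.length = k ∧ List.Chain' lt x.2.2.edges}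

lemma mset_finite (k : ℕ) : (MSet H lt k).Finite := by
  classical
  letI : DecidableRel H.Adj := Classical.decRel _
  have : (MSet H lt k) ⊆ {x : (u : V) × (v : V) × H.Walk u v | x.2.2.length = k} :=
    fun x hx => hx.1
  refine Set.Finite.subset ?_ this
  have he : {x : (u : V) × (v : V) × H.Walk u v | x.2.2.length = k} =
      Set.range (fun y : (u : V) × (v : V) × {p : H.Walk u v // p.length = k} =>
        (⟨y.1, y.2.1, y.2.2.1⟩ : (u : V) × (v : V) × H.Walk u v)) := by
    ext x
    constructor
    · intro hx; exact ⟨⟨x.1, x.2.1, ⟨x.2.2, hx⟩⟩, rfl⟩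
    · rintro ⟨y, rfl⟩; exact y.2.2.2
  rw [he]
  exact Set.finite_range _

end MonoTrail2





namespace Part2
open MonoTrail

variable {V : Type} [Fintype V] {H : SimpleGraph V} {lt : Sym2 V → Sym2 V → Prop}

instance : Finite H.Dart := Finite.of_injective _ SimpleGraph.Dart.toProd_injective

def Sj (h : IsEdgeOrder H lt) (j : ℕ) : Set H.Dart := {d | (iterN h j d).isSome}

lemma Sj_zero (h : IsEdgeOrder H lt) : Sj h 0 = Set.univ := by
  ext d; simp [Sj, iterN]

lemma Sj_succ_subset (h : IsEdgeOrder H lt) (j : ℕ) : Sj h (j+1) ⊆ Sj h j := by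
  intro d hd
  simp only [Sj, Set.mem_setOf_eq, iterN] at hd ⊢
  rcases hb : iterN h j d with _ | γ
  · rw [hb] at hd; simp at hd
  · simp

lemma Sj_card_step (h : IsEdgeOrder H lt) (j : ℕ) :
    (Sj h j).ncard ≤ (Sj h (j+1)).ncard + Fintype.card V := by
  classical
  have hsub := Sj_succ_subset h j
  have hfin : (Sj h j).Finite := Set.toFinite _
  have hdiff : (Sj h j).ncard = (Sj h (j+1)).ncard + ((Sj h j) \ (Sj h (j+1))).ncard := by
    rw [Set.ncard_diff hsub (Set.toFinite _), Nat.add_sub_cancel' (Set.ncard_le_ncard hsub hfin)]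
  rw [hdiff]
  refine Nat.add_le_add_left ?_ _
  -- injective map into V
  have hkey : ∀ d ∈ (Sj h j) \ (Sj h (j+1)), ∃ γ : H.Dart, iterN h j d = some γ ∧ nxt h γ = none := by
    intro d hd
    obtain ⟨hd1, hd2⟩ := hd
    simp only [Sj, Set.mem_setOf_eq] at hd1 hd2
    rcases hb : iterN h j d with _ | γ
    · rw [hb] at hd1; simp at hd1
    · refine ⟨γ, rfl, ?_⟩
      rcases hn : nxt h γ with _ | δ
      · rfl
      · exfalso
        apply hd2
        show (iterN h (j+1) d).isSome
        simp [iterN, hb, hn]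
  set f : H.Dart → V := fun d => (Option.getD (Option.map (fun γ : H.Dart => γ.snd) (iterN h j d)) d.snd) with hf
  have hfval : ∀ d ∈ (Sj h j) \ (Sj h (j+1)), ∀ γ : H.Dart, iterN h j d = some γ → f d = γ.snd := by
    intro d _ γ hγ
    rw [hf]; simp [hγ]
  have hle := Set.ncard_le_ncard_of_injOn f
    (fun a _ => (Set.mem_univ (f a) : f a ∈ (Set.univ : Set V)))
    (by
      intro a ha b hb hab
      obtain ⟨γa, hga, hda⟩ := hkey a ha
      obtain ⟨γb, hgb, hdb⟩ := hkey b hb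
      rw [hfval a ha γa hga, hfval b hb γb hgb] at hab
      have : γa = γb := dead_snd_inj h hda hdb hab
      subst this
      exact iterN_inj h j hga hgb)
    (Set.toFinite _)
  simpa [Set.ncard_univ, Nat.card_eq_fintype_card] using hle

end Part2

namespace Part3
open MonoTrail Part2 MonoTrail2

variable {V : Type} [Fintype V] {H : SimpleGraph V} {lt : Sym2 V → Sym2 V → Prop}

lemma Sj_card (h : IsEdgeOrder H lt) (j : ℕ) :
    Nat.card H.Dart ≤ (Sj h j).ncard + j * Fintype.card V := by
  induction j with
  | zero =>
    rw [← Set.ncard_univ, ← Sj_zero h]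
    simp
  | succ j ih =>
    calc Nat.card H.Dart ≤ (Sj h j).ncard + j * Fintype.card V := ih
    _ ≤ ((Sj h (j+1)).ncard + Fintype.card V) + j * Fintype.card V :=
        Nat.add_le_add_right (Sj_card_step h j) _
    _ = (Sj h (j+1)).ncard + (j+1) * Fintype.card V := by ring

lemma exists_walk (h : IsEdgeOrder H lt) (j : ℕ) :
    ∀ d : H.Dart, (iterN h j d).isSome →
      ∃ (v : V) (w : H.Walk d.fst v), w.length = j + 1 ∧ List.Chain' lt w.edges ∧
        w.edges.head? = some d.edge := by
  induction j with
  | zero =>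
    intro d _
    exact ⟨d.snd, SimpleGraph.Walk.cons d.adj SimpleGraph.Walk.nil, by simp,
      List.isChain_singleton _, by simp [SimpleGraph.Dart.edge]⟩
  | succ j ih =>
    intro d hd
    rw [iterN_succ_front] at hd
    rcases hn : nxt h d with _ | d'
    · rw [hn] at hd; simp at hd
    rw [hn] at hd
    simp only [Option.bind_some] at hd
    obtain ⟨hfst, hlt, _⟩ := nxt_some_spec h hn
    obtain ⟨v, w', hl, hch, hh⟩ := ih d' hd
    obtain ⟨⟨a, b⟩, hab⟩ := d'
    simp only at hfst
    -- d'.fst = a, hfst : a = d.snd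
    subst hfst
    refine ⟨v, SimpleGraph.Walk.cons d.adj w', by simp [hl], ?_, ?_⟩
    · rw [SimpleGraph.Walk.edges_cons]
      refine List.isChain_cons.mpr ?_
      constructor
      · intro e he
        rw [hh] at he
        have he2 : s(d.snd, b) = e := by simpa using he
        rw [← he2]
        exact hlt
      · exact hch
    · simp [SimpleGraph.Dart.edge]

lemma dart_eq_of_edge_fst {d₁ d₂ : H.Dart} (he : d₁.edge = d₂.edge) (hs : d₁.fst = d₂.fst) :
    d₁ = d₂ := by
  rcases SimpleGraph.dart_edge_eq_iff d₁ d₂ |>.mp he with rfl | rfl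
  · rfl
  · exfalso
    have : d₂.symm.fst = d₂.fst := hs
    simp only [SimpleGraph.Dart.symm_toProd, Prod.fst_swap] at this
    exact d₂.snd_ne_fst this

lemma dart_count : Nat.card H.Dart = 2 * H.edgeSet.ncard := by
  classical
  letI : DecidableRel H.Adj := Classical.decRel _
  letI : Fintype H.edgeSet := Set.Finite.fintype (Set.toFinite _)
  rw [Nat.card_eq_fintype_card, SimpleGraph.dart_card_eq_twice_card_edges,
    Set.ncard_eq_toFinset_card']
  congr 2
  ext e
  simp

noncomputable def pick (h : IsEdgeOrder H lt) (j : ℕ) (d : H.Dart) :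
    (u : V) × (v : V) × H.Walk u v :=
  if hd : (iterN h j d).isSome then
    ⟨d.fst, (exists_walk h j d hd).choose, (exists_walk h j d hd).choose_spec.choose⟩
  else ⟨d.fst, d.fst, SimpleGraph.Walk.nil⟩

lemma pick_spec (h : IsEdgeOrder H lt) (j : ℕ) (d : H.Dart) (hd : (iterN h j d).isSome) :
    (pick h j d).1 = d.fst ∧ (pick h j d).2.2.length = j + 1 ∧
      List.Chain' lt (pick h j d).2.2.edges ∧
      (pick h j d).2.2.edges.head? = some d.edge := by
  have hspec := (exists_walk h j d hd).choose_spec.choose_spec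
  unfold pick
  rw [dif_pos hd]
  exact ⟨rfl, hspec.1, hspec.2.1, hspec.2.2⟩

lemma base_bound (h : IsEdgeOrder H lt) (j : ℕ) :
    2 * H.edgeSet.ncard ≤ (MSet H lt (j+1)).ncard + j * Fintype.card V := by
  rw [← dart_count]
  refine le_trans (Sj_card h j) (Nat.add_le_add_right ?_ _)
  refine Set.ncard_le_ncard_of_injOn (pick h j) ?_ ?_ (mset_finite H lt (j+1))
  · intro d hd
    obtain ⟨_, h1, h2, _⟩ := pick_spec h j d hd
    exact ⟨h1, h2⟩
  · intro d₁ h₁ d₂ h₂ heq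
    obtain ⟨ha1, _, _, hb1⟩ := pick_spec h j d₁ h₁
    obtain ⟨ha2, _, _, hb2⟩ := pick_spec h j d₂ h₂
    have hg : ∀ x y : (u : V) × (v : V) × H.Walk u v, x = y →
        x.1 = y.1 ∧ x.2.2.edges.head? = y.2.2.edges.head? := by
      rintro x y rfl; exact ⟨rfl, rfl⟩
    obtain ⟨hfst, hhead⟩ := hg _ _ heq
    rw [ha1, ha2] at hfst
    rw [hb1, hb2] at hhead
    exact dart_eq_of_edge_fst (Option.some_inj.mp hhead) hfst

end Part3

namespace Part4
open MonoTrail Part2 Part3 MonoTrail2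

variable {V : Type} [Fintype V] {H : SimpleGraph V} {lt : Sym2 V → Sym2 V → Prop}

open Classical in
/-- number of monotone `k`-trail walks through a given edge -/
noncomputable def through (H : SimpleGraph V) (lt : Sym2 V → Sym2 V → Prop) (k : ℕ)
    (e : Sym2 V) : ℕ :=
  ((mset_finite H lt k).toFinset.filter (fun x => e ∈ x.2.2.edges)).card

open Classical in
lemma sum_through (h : IsEdgeOrder H lt) (k : ℕ) :
    ∑ e ∈ (H.edgeSet.toFinite).toFinset, through H lt k e = k * (MSet H lt k).ncard := by
  classical
  unfold through
  rw [Set.ncard_eq_toFinset_card _ (mset_finite H lt k)]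
  set F := (mset_finite H lt k).toFinset with hF
  set EF := (H.edgeSet.toFinite).toFinset with hEF
  have : ∀ e ∈ EF, (F.filter (fun x => e ∈ x.2.2.edges)).card
      = ∑ x ∈ F, if e ∈ x.2.2.edges then 1 else 0 := by
    intro e _
    rw [Finset.card_filter]
  rw [Finset.sum_congr rfl this, Finset.sum_comm]
  have hinner : ∀ x ∈ F, (∑ e ∈ EF, if e ∈ x.2.2.edges then 1 else 0) = k := by
    intro x hx
    rw [← Finset.card_filter]
    have hxm : x ∈ MSet H lt k := (Set.Finite.mem_toFinset _).mp hx
    have hsubE : ∀ e ∈ x.2.2.edges, e ∈ H.edgeSet :=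
      fun e he => SimpleGraph.Walk.edges_subset_edgeSet _ he
    have hfe : EF.filter (fun e => e ∈ x.2.2.edges) = x.2.2.edges.toFinset := by
      ext e
      simp only [Finset.mem_filter, List.mem_toFinset, hEF, Set.Finite.mem_toFinset]
      exact ⟨fun hp => hp.2, fun hp => ⟨hsubE e hp, hp⟩⟩
    rw [hfe, List.card_toFinset,
      List.dedup_eq_self.mpr (chain'_nodup h _ hsubE hxm.2), ← hxm.1]
    rw [SimpleGraph.Walk.length_edges]
  rw [Finset.sum_congr rfl hinner, Finset.sum_const, smul_eq_mul, mul_comm]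

end Part4

namespace Part5
open MonoTrail Part2 Part3 Part4 MonoTrail2

variable {V : Type} [Fintype V] {H : SimpleGraph V} {lt : Sym2 V → Sym2 V → Prop}

lemma exists_good_edge (h : IsEdgeOrder H lt) (k : ℕ) (hm : H.edgeSet.Nonempty) :
    ∃ e ∈ H.edgeSet, k * (MSet H lt k).ncard ≤ H.edgeSet.ncard * through H lt k e := by
  classical
  set EF := (H.edgeSet.toFinite).toFinset with hEF
  have hne : EF.Nonempty := by
    obtain ⟨e, he⟩ := hm
    exact ⟨e, (Set.Finite.mem_toFinset _).mpr he⟩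
  have hsum := sum_through h k
  have hcard : EF.card = H.edgeSet.ncard := (Set.ncard_eq_toFinset_card _ _).symm
  by_contra hcon
  push_neg at hcon
  have hlt' : ∀ e ∈ EF, H.edgeSet.ncard * through H lt k e + 1 ≤ k * (MSet H lt k).ncard := by
    intro e he
    exact Nat.succ_le_of_lt (hcon e ((Set.Finite.mem_toFinset _).mp he))
  -- sum up
  have := Finset.sum_le_sum hlt'
  rw [Finset.sum_add_distrib, Finset.sum_const, ← Finset.mul_sum, hsum, Finset.sum_const] at this
  rw [hcard] at this
  simp only [smul_eq_mul, mul_one] at this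
  have hpos : 0 < H.edgeSet.ncard := by
    rw [← hcard]; exact Finset.card_pos.mpr hne
  omega

lemma deletion_split (h : IsEdgeOrder H lt) (k : ℕ) (e : Sym2 V) (he : e ∈ H.edgeSet) :
    (MSet H lt k).ncard = through H lt k e + (MSet (H.deleteEdges {e}) lt k).ncard := by
  classical
  set H' := H.deleteEdges {e} with hH'
  have hle : H' ≤ H := SimpleGraph.deleteEdges_le _
  rw [Set.ncard_eq_toFinset_card _ (mset_finite H lt k),
    Set.ncard_eq_toFinset_card _ (mset_finite H' lt k)]
  set F := (mset_finite H lt k).toFinset with hF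
  unfold through
  rw [← Finset.card_filter_add_card_filter_not (s := F) (p := fun x => e ∈ x.2.2.edges)]
  congr 1
  -- bijection between walks of H avoiding e and walks of H'
  apply Finset.card_nbij' 
    (fun x => if hx : ∀ f ∈ x.2.2.edges, f ∈ H'.edgeSet then ⟨x.1, x.2.1, x.2.2.transfer H' hx⟩
      else ⟨x.1, x.1, SimpleGraph.Walk.nil⟩)
    (fun y => ⟨y.1, y.2.1, y.2.2.transfer H (fun f hf =>
      SimpleGraph.edgeSet_mono hle (SimpleGraph.Walk.edges_subset_edgeSet _ hf))⟩)
  · intro x hx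
    rw [Finset.mem_coe, Finset.mem_filter] at hx
    obtain ⟨hxF, hxe⟩ := hx
    have hxm : x ∈ MSet H lt k := (Set.Finite.mem_toFinset _).mp hxF
    have hcond : ∀ f ∈ x.2.2.edges, f ∈ H'.edgeSet := by
      intro f hf
      rw [hH', SimpleGraph.edgeSet_deleteEdges]
      refine ⟨SimpleGraph.Walk.edges_subset_edgeSet _ hf, ?_⟩
      rw [Set.mem_singleton_iff]
      rintro rfl
      exact hxe hf
    simp only [dif_pos hcond]
    refine (Set.Finite.mem_toFinset _).mpr ?_
    exact ⟨by simpa using hxm.1, by simpa using hxm.2⟩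
  · intro y hy
    have hym : y ∈ MSet H' lt k := (Set.Finite.mem_toFinset _).mp hy
    rw [Finset.mem_coe, Finset.mem_filter]
    constructor
    · exact (Set.Finite.mem_toFinset _).mpr ⟨by simpa using hym.1, by simpa using hym.2⟩
    · intro hcon
      simp only [SimpleGraph.Walk.edges_transfer] at hcon
      have hmem := SimpleGraph.Walk.edges_subset_edgeSet _ hcon
      rw [hH', SimpleGraph.edgeSet_deleteEdges] at hmem
      exact hmem.2 rfl
  · intro x hx
    rw [Finset.mem_coe, Finset.mem_filter] at hx
    obtain ⟨hxF, hxe⟩ := hx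
    have hcond : ∀ f ∈ x.2.2.edges, f ∈ H'.edgeSet := by
      intro f hf
      rw [hH', SimpleGraph.edgeSet_deleteEdges]
      refine ⟨SimpleGraph.Walk.edges_subset_edgeSet _ hf, ?_⟩
      rw [Set.mem_singleton_iff]
      rintro rfl
      exact hxe hf
    conv_lhs => arg 1; beta_reduce; rw [dif_pos hcond]
    obtain ⟨u, v, w⟩ := x
    show (⟨u, v, (w.transfer H' _).transfer H _⟩ : (u : V) × (v : V) × H.Walk u v) = ⟨u, v, w⟩
    rw [SimpleGraph.Walk.transfer_transfer]
    exact congrArg (fun z => (⟨u, v, z⟩ : (u : V) × (v : V) × H.Walk u v))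
      (SimpleGraph.Walk.transfer_self w)
  · intro y hy
    have hym : y ∈ MSet H' lt k := (Set.Finite.mem_toFinset _).mp hy
    obtain ⟨u, v, w⟩ := y
    have hcond : ∀ f ∈ (w.transfer H (fun f hf =>
        SimpleGraph.edgeSet_mono hle (SimpleGraph.Walk.edges_subset_edgeSet _ hf))).edges,
        f ∈ H'.edgeSet := by
      intro f hf
      simp only [SimpleGraph.Walk.edges_transfer] at hf
      exact SimpleGraph.Walk.edges_subset_edgeSet _ hf
    show dite _ _ _ = _
    rw [dif_pos hcond]
    show (⟨u, v, (w.transfer H _).transfer H' _⟩ : (u : V) × (v : V) × H'.Walk u v) = ⟨u, v, w⟩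
    rw [SimpleGraph.Walk.transfer_transfer]
    exact congrArg (fun z => (⟨u, v, z⟩ : (u : V) × (v : V) × H'.Walk u v))
      (SimpleGraph.Walk.transfer_self w)

end Part5

namespace Part6
open MonoTrail Part2 Part3 Part4 Part5 MonoTrail2

lemma bern_aux (k m : ℕ) : (m - k) * m ^ k ≤ m * (m - 1) ^ k := by
  induction k with
  | zero => simp [Nat.sub_le]
  | succ k ih =>
    have h1 : (m - (k+1)) * m ≤ (m - k) * (m - 1) := by
      have e1 : m - (k+1) = (m - k) - 1 := by omega
      rw [e1, Nat.sub_one_mul, Nat.mul_sub_one]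
      exact Nat.sub_le_sub_left (Nat.sub_le m k) _
    calc (m - (k+1)) * m ^ (k+1) = ((m - (k+1)) * m) * m ^ k := by ring
      _ ≤ ((m - k) * (m - 1)) * m ^ k := Nat.mul_le_mul_right _ h1
      _ = (m - 1) * ((m - k) * m ^ k) := by ring
      _ ≤ (m - 1) * (m * (m - 1) ^ k) := Nat.mul_le_mul_left _ ih
      _ = m * (m - 1) ^ (k+1) := by ring

variable {V : Type} [Fintype V]

lemma key (n : ℕ) (hn : Fintype.card V = n) (k : ℕ) (hk : 1 ≤ k) :
    ∀ m : ℕ, ∀ H : SimpleGraph V, ∀ lt : Sym2 V → Sym2 V → Prop,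
      IsEdgeOrder H lt → H.edgeSet.ncard = m → k * n ≤ m →
      k * n * m ^ k ≤ (MSet H lt k).ncard * (k * n) ^ k := by
  rcases Nat.eq_zero_or_pos n with rfl | hn0
  · intro m H lt _ _ _
    simp
  intro m
  induction m using Nat.strong_induction_on with
  | _ m ih =>
    intro H lt hlt hm hkn
    rcases eq_or_lt_of_le hkn with heq | hmgt
    · -- base case m = k*n
      obtain ⟨j, rfl⟩ : ∃ j, k = j + 1 := ⟨k - 1, by omega⟩
      have hb := base_bound hlt (H := H) (lt := lt) j
      rw [hm, ← heq, hn] at hb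
      have hN : (j+1) * n ≤ (MSet H lt (j+1)).ncard := by
        have hexp : (j+1) * n = j*n + n := by ring
        have hexp2 : 2 * ((j+1) * n) = 2*(j*n) + 2*n := by ring
        omega
      rw [← heq]
      exact Nat.mul_le_mul_right _ hN
    · -- inductive step m > k*n
      have hm1 : 1 ≤ m := by omega
      have hne : H.edgeSet.Nonempty := by
        rw [← Set.ncard_pos (Set.toFinite _), hm]
        omega
      obtain ⟨e, heE, hegood⟩ := exists_good_edge hlt k hne
      set H' := H.deleteEdges {e} with hH'
      have hlt2 : IsEdgeOrder H' lt := isEdgeOrder_anti hlt (SimpleGraph.deleteEdges_le _)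
      have hm' : H'.edgeSet.ncard = m - 1 := by
        rw [hH', SimpleGraph.edgeSet_deleteEdges, Set.ncard_diff_singleton_of_mem heE, hm]
      have hkn' : k * n ≤ m - 1 := by omega
      have hIH := ih (m - 1) (by omega) H' lt hlt2 hm' hkn'
      have hsplit := deletion_split hlt k e heE
      set N := (MSet H lt k).ncard with hN
      set N' := (MSet H' lt k).ncard with hN'
      rw [hm] at hegood
      -- m * N' + k * N ≤ m * N
      have hstep : m * N' + k * N ≤ m * N := by
        calc m * N' + k * N ≤ m * N' + m * through H lt k e := by omega
          _ = m * (N' + through H lt k e) := by ring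
          _ = m * N := by rw [hsplit]; ring_nf
      have hstep2 : m * N' ≤ (m - k) * N := by
        rw [Nat.sub_mul]
        omega
      -- chain
      have hchain : (k * n * m ^ k) * (m - k) ≤ (N * (k * n) ^ k) * (m - k) := by
        calc (k * n * m ^ k) * (m - k) = (k * n) * ((m - k) * m ^ k) := by ring
          _ ≤ (k * n) * (m * (m - 1) ^ k) := Nat.mul_le_mul_left _ (bern_aux k m)
          _ = m * (k * n * (m - 1) ^ k) := by ring
          _ ≤ m * (N' * (k * n) ^ k) := Nat.mul_le_mul_left _ hIH
          _ = (m * N') * (k * n) ^ k := by ring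
          _ ≤ ((m - k) * N) * (k * n) ^ k := Nat.mul_le_mul_right _ hstep2
          _ = (N * (k * n) ^ k) * (m - k) := by ring
      have hpos : 0 < m - k := by
        have : k ≤ k * n := Nat.le_mul_of_pos_right _ hn0
        omega
      exact Nat.le_of_mul_le_mul_right hchain hpos

end Part6

open MonoTrail2 Part6

/-- **full monotone counting lemma.** There is an absolute constant `c > 0`
such that every `n`-vertex graph with average degree `d = 2|E(H)|/n ≥ 2k` contains at
least `k·n·(c·d/k)^k` distinct monotone `k`-trails. -/
theorem monotone_trail_full_count :
    ∃ c : ℝ, 0 < c ∧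
      ∀ (V : Type) [Fintype V], ∀ (H : SimpleGraph V) (lt : Sym2 V → Sym2 V → Prop),
        IsEdgeOrder H lt →
        ∀ k : ℕ, 0 < k → 0 < Fintype.card V →
          ∀ d : ℝ, d = 2 * H.edgeSet.ncard / Fintype.card V →
            2 * (k : ℝ) ≤ d →
            (k : ℝ) * Fintype.card V * (c * d / k) ^ k ≤
              ({x : (u : V) × (v : V) × H.Walk u v |
                  x.2.2.length = k ∧ List.Chain' lt x.2.2.edges}.ncard : ℝ) := by
  refine ⟨1/2, by norm_num, ?_⟩
  intro V _ H lt hlt k hk hV d hd hdk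
  have hset : {x : (u : V) × (v : V) × H.Walk u v |
      x.2.2.length = k ∧ List.Chain' lt x.2.2.edges} = MSet H lt k := rfl
  rw [hset]
  set n := Fintype.card V with hn
  set m := H.edgeSet.ncard with hm
  set N := (MSet H lt k).ncard with hN
  have hn0 : (0:ℝ) < (n:ℝ) := by exact_mod_cast hV
  have hk0 : (0:ℝ) < (k:ℝ) := by exact_mod_cast hk
  have hknm : k * n ≤ m := by
    rw [hd] at hdk
    have h2 : 2 * (k:ℝ) * n ≤ 2 * m := by
      have := (le_div_iff₀ hn0).mp hdk
      linarith
    have h3 : (k:ℝ) * n ≤ m := by linarith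
    exact_mod_cast h3
  have hkey := key n rfl k hk m H lt hlt rfl hknm
  have hkeyR : ((k:ℝ) * n) * (m:ℝ) ^ k ≤ (N:ℝ) * ((k:ℝ)*n) ^ k := by
    have := (Nat.cast_le (α := ℝ)).mpr hkey
    push_cast at this
    convert this using 2 <;> ring
  have hc : (1/2 : ℝ) * d / k = (m:ℝ)/((k:ℝ)*(n:ℝ)) := by
    rw [hd]
    field_simp
  rw [hc, div_pow]
  have hknpos : (0:ℝ) < ((k:ℝ)*n) ^ k := by positivity
  rw [mul_div_assoc', div_le_iff₀ hknpos]
  calc (k:ℝ) * n * (m:ℝ)^k ≤ (N:ℝ) * ((k:ℝ)*n)^k := hkeyR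
    _ = _ := by ring
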